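/- Let E be a real inner product space (e.g., Euclidean space ℝⁿ) and let C₁, …, C_K be pairwise disjoint nonempty finite subsets of E with max_i diam(C_i) ≤ η/2 and min_{i≠j} d_H(C_i, C_j) ≥ δ, where δ > η > 0. Then every point is strictly closer to the centroid of its own cluster than to any point of a different cluster: for all i ≠ j, x ∈ C_i and y ∈ C_j, one has ‖x − (1/|C_i|) ∑_{s ∈ C_i} s‖ < ‖x − y‖. -/

import Mathlib

/-- In a real inner product space, for pairwise disjoint nonempty
finite clusters with `max diam ≤ η/2`, pairwise Hausdorff distance at least
`δ`, and `δ > η > 0`, every point is strictly closer to the centroid of its own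
cluster than to any point of a different cluster. -/
theorem stmt_13 {E : Type*} [NormedAddCommGroup E] [InnerProductSpace ℝ E]
    (K : ℕ) (C : Fin K → Finset E)
    (hdisj : Pairwise (Function.onFun Disjoint C))
    (hne : ∀ i, (C i).Nonempty)
    (η δ : ℝ) (hηpos : 0 < η) (hδη : η < δ)
    (hdiam : ∀ i, Metric.diam (C i : Set E) ≤ η / 2)
    (hsep : ∀ i j, i ≠ j → δ ≤ Metric.hausdorffDist (C i : Set E) (C j : Set E)) :
    ∀ i j, i ≠ j → ∀ x ∈ C i, ∀ y ∈ C j,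
      ‖x - ((C i).card : ℝ)⁻¹ • ∑ s ∈ C i, s‖ < ‖x - y‖ := by
  intro i j hij x hx y hy
  have hbi : Bornology.IsBounded (C i : Set E) := (C i).finite_toSet.isBounded
  have hbj : Bornology.IsBounded (C j : Set E) := (C j).finite_toSet.isBounded
  have hcard : (0 : ℝ) < (C i).card := by
    exact_mod_cast Finset.card_pos.mpr (hne i)
  -- distance from x to centroid ≤ η/2
  have hcent : ‖x - ((C i).card : ℝ)⁻¹ • ∑ s ∈ C i, s‖ ≤ η / 2 := by
    have h1 : x - ((C i).card : ℝ)⁻¹ • ∑ s ∈ C i, s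
        = ((C i).card : ℝ)⁻¹ • ∑ s ∈ C i, (x - s) := by
      rw [Finset.sum_sub_distrib, smul_sub, Finset.sum_const, ← Nat.cast_smul_eq_nsmul ℝ,
        smul_smul, inv_mul_cancel₀ hcard.ne', one_smul]
    rw [h1]
    calc ‖((C i).card : ℝ)⁻¹ • ∑ s ∈ C i, (x - s)‖
        ≤ ((C i).card : ℝ)⁻¹ * ∑ s ∈ C i, ‖x - s‖ := by
          rw [norm_smul, Real.norm_eq_abs, abs_of_pos (inv_pos.mpr hcard)]
          exact mul_le_mul_of_nonneg_left (norm_sum_le _ _) (by positivity)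
      _ ≤ ((C i).card : ℝ)⁻¹ * ∑ s ∈ C i, (η / 2) := by
          refine mul_le_mul_of_nonneg_left (Finset.sum_le_sum fun s hs => ?_) (by positivity)
          have := Metric.dist_le_diam_of_mem hbi hx hs
          calc ‖x - s‖ = dist x s := (dist_eq_norm x s).symm
            _ ≤ Metric.diam (C i : Set E) := this
            _ ≤ η / 2 := hdiam i
      _ = η / 2 := by
          rw [Finset.sum_const, nsmul_eq_mul, ← mul_assoc, inv_mul_cancel₀ hcard.ne', one_mul]
  -- Hausdorff distance ≤ η/2 + dist x y
  have hHle : Metric.hausdorffDist (C i : Set E) (C j : Set E) ≤ η / 2 + dist x y := by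
    apply Metric.hausdorffDist_le_of_mem_dist
    · positivity
    · intro a ha
      exact ⟨y, hy, by
        calc dist a y ≤ dist a x + dist x y := dist_triangle a x y
          _ ≤ η / 2 + dist x y := by
              have := (Metric.dist_le_diam_of_mem hbi ha hx).trans (hdiam i)
              linarith⟩
    · intro b hb
      exact ⟨x, hx, by
        calc dist b x ≤ dist b y + dist y x := dist_triangle b y x
          _ ≤ η / 2 + dist x y := by
              have := (Metric.dist_le_diam_of_mem hbj hb hy).trans (hdiam j)
              rw [dist_comm y x]; linarith⟩
  have hδle : δ ≤ η / 2 + dist x y := le_trans (hsep i j hij) hHle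
  have : η / 2 < dist x y := by linarith
  calc ‖x - ((C i).card : ℝ)⁻¹ • ∑ s ∈ C i, s‖ ≤ η / 2 := hcent
    _ < dist x y := this
    _ = ‖x - y‖ := dist_eq_norm x y
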